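/- For every countable limit ordinal α there exists a countable reduced abelian p-group G of length exactly α such that u_β(G) = ℵ₀ for every ordinal β < α. -/

import Mathlib

open Ordinal

/-- Scalar multiplication by `p` as an additive group homomorphism. -/
def pHom (p : ℕ) (G : Type*) [AddCommGroup G] : G →+ G :=
  AddMonoidHom.mk' (fun x => p • x) (fun a b => smul_add p a b)

@[simp] lemma pHom_apply (p : ℕ) {G : Type*} [AddCommGroup G] (x : G) :
    pHom p G x = p • x := rfl

/-- The Ulm subgroups `G_β`: `G_0 = G`, `G_{β+1} = pG_β`, and intersections at limits. -/
noncomputable def ulmSub (p : ℕ) (G : Type*) [AddCommGroup G] (β : Ordinal.{0}) :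
    AddSubgroup G :=
  Ordinal.limitRecOn β ⊤ (fun _ H => AddSubgroup.map (pHom p G) H)
    (fun o _ ih => ⨅ (γ : Ordinal.{0}) (h : γ < o), ih γ h)

lemma ulmSub_succ (p : ℕ) (G : Type*) [AddCommGroup G] (β : Ordinal.{0}) :
    ulmSub p G (β + 1) = AddSubgroup.map (pHom p G) (ulmSub p G β) := by
  unfold ulmSub
  rw [Ordinal.add_one_eq_succ, Ordinal.limitRecOn_succ]

lemma ulmSub_succ_le (p : ℕ) (G : Type*) [AddCommGroup G] (β : Ordinal.{0}) :
    ulmSub p G (β + 1) ≤ ulmSub p G β := by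
  rw [ulmSub_succ]
  rintro x ⟨y, hy, rfl⟩
  simpa using (ulmSub p G β).nsmul_mem hy p

/-- An abelian `p`-group: every element is killed by some power of `p`. -/
def IsAbelianPGroup (p : ℕ) (G : Type*) [AddCommGroup G] : Prop :=
  ∀ x : G, ∃ n : ℕ, p ^ n • x = 0

/-- The length `λ(G)`: the least ordinal `β` with `G_β = G_{β+1}`. -/
noncomputable def ulmLength (p : ℕ) (G : Type*) [AddCommGroup G] : Ordinal.{0} :=
  sInf {β : Ordinal.{0} | ulmSub p G β = ulmSub p G (β + 1)}

/-- `G` is reduced if `G_{λ(G)} = {0}`. -/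
def IsReducedPGroup (p : ℕ) (G : Type*) [AddCommGroup G] : Prop :=
  ulmSub p G (ulmLength p G) = ⊥

/-- `P_β(G) = {x ∈ G_β : px = 0}`. -/
noncomputable def ulmP (p : ℕ) (G : Type*) [AddCommGroup G] (β : Ordinal.{0}) : AddSubgroup G :=
  (pHom p G).ker ⊓ ulmSub p G β

/-- The quotient `P_β(G)/P_{β+1}(G)` (as a quotient of `P_β(G)` by the subgroup
corresponding to `P_{β+1}(G)`). -/
noncomputable def ulmQuot (p : ℕ) (G : Type*) [AddCommGroup G] (β : Ordinal.{0}) :=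
  (ulmP p G β) ⧸ ((ulmP p G (β + 1)).addSubgroupOf (ulmP p G β))

noncomputable instance (p : ℕ) (G : Type*) [AddCommGroup G] (β : Ordinal.{0}) :
    AddCommGroup (ulmQuot p G β) :=
  inferInstanceAs (AddCommGroup ((ulmP p G β) ⧸ ((ulmP p G (β + 1)).addSubgroupOf (ulmP p G β))))

noncomputable instance (p : ℕ) (G : Type*) [AddCommGroup G] (β : Ordinal.{0}) :
    Module (ZMod p) (ulmQuot p G β) :=
  QuotientAddGroup.zmodModule (by
    intro x
    simp only [AddSubgroup.mem_addSubgroupOf]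
    have hx : ((p • x : ulmP p G β) : G) = 0 := by
      have := x.2
      simp only [ulmP, AddSubgroup.mem_inf, AddMonoidHom.mem_ker, pHom_apply] at this
      simpa using this.1
    rw [hx]
    exact (ulmP p G (β + 1)).zero_mem)

/-- The Ulm invariant `u_β(G)`: the dimension of `P_β(G)/P_{β+1}(G)` over `ℤ/pℤ`. -/
noncomputable def ulmInvariant (p : ℕ) (G : Type*) [AddCommGroup G] (β : Ordinal.{0}) :
    Cardinal :=
  Module.rank (ZMod p) (ulmQuot p G β)


open Finsupp

namespace UlmConstr

variable (p : ℕ) (ord : ℕ → Ordinal.{0})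

/-- Increasing (w.r.t. `ord`) nonempty lists of naturals. The head is the "last" (smallest)
ordinal of the corresponding decreasing sequence. -/
def UT : Type := {l : List ℕ // l ≠ [] ∧ l.Chain' fun m n => ord m < ord n}

instance : Countable (UT ord) := by unfold UT; infer_instance

noncomputable def uhd (σ : UT ord) : Ordinal.{0} := ord (σ.1.head σ.2.1)

def utl (σ : UT ord) : Option (UT ord) :=
  if h : σ.1.tail = [] then none else some ⟨σ.1.tail, h, σ.2.2.tail⟩

lemma utl_length {σ τ : UT ord} (h : utl ord σ = some τ) : σ.1.length = τ.1.length + 1 := by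
  unfold utl at h
  split at h
  · exact absurd h (by simp)
  · obtain ⟨l, hne, hch⟩ := σ
    cases l with
    | nil => exact absurd rfl hne
    | cons a l =>
      simp only [Option.some.injEq] at h
      cases h
      simp

lemma utl_hd {σ τ : UT ord} (h : utl ord σ = some τ) : uhd ord σ < uhd ord τ := by
  unfold utl at h
  split at h
  · exact absurd h (by simp)
  · next hne =>
    obtain ⟨l, hln, hch⟩ := σ
    simp only [Option.some.injEq] at h
    cases h
    cases l with
    | nil => exact absurd rfl hln
    | cons a l =>
      cases l with
      | nil => simp at hne
      | cons b t =>
        have := (List.isChain_cons_cons.mp hch).1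
        simpa [uhd] using this

def ucons (n : ℕ) (σ : UT ord) (h : ord n < uhd ord σ) : UT ord :=
  ⟨n :: σ.1, by simp, by
    rw [List.Chain', List.isChain_cons]
    refine ⟨?_, σ.2.2⟩
    intro y hy
    obtain ⟨l, hne, hch⟩ := σ
    cases l with
    | nil => exact absurd rfl hne
    | cons a t => simp only [List.head?_cons, Option.mem_def, Option.some.injEq] at hy
                  subst hy; exact h⟩

lemma utl_ucons (n : ℕ) (σ : UT ord) (h : ord n < uhd ord σ) :
    utl ord (ucons ord n σ h) = some σ := by
  unfold utl ucons
  have : σ.1 ≠ [] := σ.2.1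
  simp only [List.tail_cons]
  exact dif_neg this

lemma uhd_ucons (n : ℕ) (σ : UT ord) (h : ord n < uhd ord σ) :
    uhd ord (ucons ord n σ h) = ord n := rfl

lemma one_le_length (σ : UT ord) : 1 ≤ σ.1.length :=
  List.length_pos_iff.mpr σ.2.1

/-- The free abelian group. -/
abbrev UF : Type := UT ord →₀ ℤ

/-- `δ_{tail σ}`, or `0` for singletons. -/
noncomputable def tlδ (σ : UT ord) : UF ord := (utl ord σ).elim 0 fun τ => single τ 1

/-- The relator `p·δ_σ - δ_{tail σ}`. -/
noncomputable def urel (σ : UT ord) : UF ord := (p : ℤ) • single σ 1 - tlδ ord σ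

/-- The relation subgroup. -/
noncomputable def UR : AddSubgroup (UF ord) := AddSubgroup.closure (Set.range (urel p ord))

/-- The group. -/
def UG : Type := UF ord ⧸ UR p ord

noncomputable instance : AddCommGroup (UG p ord) :=
  inferInstanceAs (AddCommGroup (UF ord ⧸ UR p ord))

instance : Countable (UG p ord) :=
  inferInstanceAs (Countable (Quotient (QuotientAddGroup.leftRel (UR p ord))))

noncomputable def umk : UF ord →+ UG p ord := QuotientAddGroup.mk' (UR p ord)

lemma umk_surjective : Function.Surjective (umk p ord) :=
  QuotientAddGroup.mk'_surjective _

lemma umk_eq_iff {f g : UF ord} : umk p ord f = umk p ord g ↔ f - g ∈ UR p ord := by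
  exact QuotientAddGroup.eq_iff_sub_mem (N := UR p ord) (x := f) (y := g)

lemma umk_eq_zero_iff {f : UF ord} : umk p ord f = 0 ↔ f ∈ UR p ord := by
  have := umk_eq_iff p ord (f := f) (g := 0)
  simpa using this


lemma urel_mem : ∀ σ : UT ord, urel p ord σ ∈ UR p ord := fun σ =>
  AddSubgroup.subset_closure ⟨σ, rfl⟩

lemma umk_urel (σ : UT ord) : umk p ord (urel p ord σ) = 0 :=
  (umk_eq_zero_iff p ord).mpr (urel_mem p ord σ)

/-- Key relation in the quotient: `p • [δ_σ] = [δ_{tail σ}]`. -/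
lemma p_smul_umk_single (σ : UT ord) :
    p • umk p ord (single σ 1) = umk p ord (tlδ ord σ) := by
  have h1 : (p : ℤ) • single σ (1 : ℤ) = (p : ℕ) • single σ (1 : ℤ) := by
    rw [natCast_zsmul]
  have := umk_urel p ord σ
  rw [urel, map_sub, sub_eq_zero, h1, map_nsmul] at this
  exact this

/-- The candidate Ulm subgroups. -/
noncomputable def US (γ : Ordinal.{0}) : AddSubgroup (UG p ord) :=
  AddSubgroup.closure ((fun σ => umk p ord (single σ 1)) '' {σ : UT ord | γ ≤ uhd ord σ})

lemma US_antitone {γ δ : Ordinal.{0}} (h : γ ≤ δ) : US p ord δ ≤ US p ord γ :=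
  AddSubgroup.closure_mono (Set.image_mono fun σ hσ => le_trans h hσ)

lemma closure_single_eq (s : Set (UT ord)) :
    AddSubgroup.closure ((fun σ => (single σ 1 : UF ord)) '' s)
      = (Finsupp.supported ℤ ℤ s).toAddSubgroup := by
  rw [← Submodule.span_int_eq_addSubgroupClosure]
  congr 1
  rw [Finsupp.supported_eq_span_single]

lemma mem_US_iff {γ : Ordinal.{0}} {x : UG p ord} :
    x ∈ US p ord γ ↔ ∃ f : UF ord, (∀ σ ∈ f.support, γ ≤ uhd ord σ) ∧ umk p ord f = x := by
  have himg : ((fun σ => umk p ord (single σ 1)) '' {σ : UT ord | γ ≤ uhd ord σ})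
      = (umk p ord) '' ((fun σ => (single σ 1 : UF ord)) '' {σ : UT ord | γ ≤ uhd ord σ}) := by
    rw [Set.image_image]
  rw [US, himg, ← AddMonoidHom.map_closure, closure_single_eq]
  constructor
  · rintro ⟨f, hf, rfl⟩
    exact ⟨f, fun σ hσ => (Finsupp.mem_supported ℤ f).mp hf hσ, rfl⟩
  · rintro ⟨f, hf, rfl⟩
    exact ⟨f, (Finsupp.mem_supported ℤ f).mpr hf, rfl⟩

/-- Membership via representation as combination of relators. -/
lemma mem_UR_iff {f : UF ord} :
    f ∈ UR p ord ↔ ∃ g : UT ord →₀ ℤ, (g.sum fun σ c => c • urel p ord σ) = f := by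
  rw [UR, ← Submodule.span_int_eq_addSubgroupClosure]
  exact Finsupp.mem_span_range_iff_exists_finsupp


lemma sum_smul_single_eq (g : UT ord →₀ ℤ) :
    (g.sum fun σ c => c • (single σ 1 : UF ord)) = g := by
  conv_rhs => rw [← Finsupp.sum_single g]
  apply Finsupp.sum_congr
  intro σ _
  rw [Finsupp.smul_single', mul_one]

lemma sum_smul_urel_eq (g : UT ord →₀ ℤ) :
    (g.sum fun σ c => c • urel p ord σ)
      = (p : ℤ) • g - g.sum fun σ c => c • tlδ ord σ := by
  have : (g.sum fun σ c => c • urel p ord σ)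
      = (g.sum fun σ c => c • ((p:ℤ) • (single σ 1 : UF ord))) -
        g.sum fun σ c => c • tlδ ord σ := by
    rw [← Finsupp.sum_sub]
    apply Finsupp.sum_congr
    intro σ _
    rw [urel, smul_sub]
  rw [this]
  congr 1
  have : (g.sum fun σ c => c • ((p:ℤ) • (single σ 1 : UF ord)))
      = (p:ℤ) • g.sum fun σ c => c • (single σ 1 : UF ord) := by
    rw [Finsupp.smul_sum]
    apply Finsupp.sum_congr
    intro σ _
    rw [smul_comm]
  rw [this, sum_smul_single_eq]

lemma tlδ_apply_ne_zero {σ τ : UT ord} (h : tlδ ord σ τ ≠ 0) : utl ord σ = some τ := by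
  classical
  rw [tlδ] at h
  cases hu : utl ord σ with
  | none => rw [hu] at h; simp at h
  | some τ' =>
    rw [hu] at h
    simp only [Option.elim_some] at h
    rcases eq_or_ne τ' τ with rfl | hne
    · rfl
    · rw [Finsupp.single_apply, if_neg hne] at h; simp at h

lemma decomp_apply {f h : UF ord} {g : UT ord →₀ ℤ}
    (hfg : f = h + g.sum fun σ c => c • urel p ord σ) (τ : UT ord) :
    f τ = h τ + ((p : ℤ) * g τ - g.sum fun σ c => c * tlδ ord σ τ) := by
  rw [hfg, sum_smul_urel_eq]
  simp only [Finsupp.add_apply, Finsupp.sub_apply, Finsupp.smul_apply, Finsupp.sum_apply,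
    _root_.smul_eq_mul]

/-- Core lemma: if `f` has all coefficients of absolute value `< p` and `[f] ∈ S(γ)`
(witnessed by a decomposition), then `f` is supported on `{σ : uhd σ ≥ γ}`. -/
lemma reduced_supp_of_decomp (hp : 0 < p) {γ : Ordinal.{0}} {f h : UF ord} {g : UT ord →₀ ℤ}
    (hf : ∀ σ, (f σ).natAbs < p)
    (hh : ∀ σ ∈ h.support, γ ≤ uhd ord σ)
    (hfg : f = h + g.sum fun σ c => c • urel p ord σ) :
    ∀ σ ∈ f.support, γ ≤ uhd ord σ := by
  classical
  set B := g.support.filter (fun σ => uhd ord σ < γ) with hB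
  have hext : ∀ {σ τ : UT ord}, σ ∈ g.support → tlδ ord σ τ ≠ 0 → uhd ord τ < γ →
      σ ∈ B ∧ τ.1.length < σ.1.length := by
    intro σ τ hσ ht hτγ
    have hsome := tlδ_apply_ne_zero ord ht
    have h1 : uhd ord σ < uhd ord τ := utl_hd ord hsome
    have h2 : σ.1.length = τ.1.length + 1 := utl_length ord hsome
    exact ⟨Finset.mem_filter.mpr ⟨hσ, h1.trans hτγ⟩, by omega⟩
  have hBempty : B = ∅ := by
    by_contra hne
    obtain ⟨σ0, hσ0B, hmax⟩ := Finset.exists_max_image B (fun σ => σ.1.length)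
      (Finset.nonempty_iff_ne_empty.mpr hne)
    obtain ⟨hσ0g, hσ0γ⟩ := Finset.mem_filter.mp hσ0B
    have hh0 : h σ0 = 0 := by
      by_contra h0
      exact absurd (hh σ0 (Finsupp.mem_support_iff.mpr h0)) (not_le.mpr hσ0γ)
    have hsum0 : (g.sum fun σ c => c * tlδ ord σ σ0) = 0 := by
      apply Finset.sum_eq_zero
      intro σ hσ
      by_cases ht : tlδ ord σ σ0 = 0
      · simp only [ht, mul_zero]
      · obtain ⟨hσB, hlen⟩ := hext hσ ht hσ0γ
        exact absurd (hmax σ hσB) (by omega)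
    have hfσ0 : f σ0 = (p : ℤ) * g σ0 := by
      rw [decomp_apply p ord hfg σ0, hh0, hsum0]; ring
    have hg0 : g σ0 ≠ 0 := Finsupp.mem_support_iff.mp hσ0g
    have : p ≤ (f σ0).natAbs := by
      rw [hfσ0, Int.natAbs_mul, Int.natAbs_natCast]
      have : 1 ≤ (g σ0).natAbs := Nat.one_le_iff_ne_zero.mpr (Int.natAbs_ne_zero.mpr hg0)
      calc p = p * 1 := (mul_one p).symm
      _ ≤ p * (g σ0).natAbs := Nat.mul_le_mul_left p this
    exact absurd (hf σ0) (not_lt.mpr this)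
  intro τ hτ
  by_contra hlt
  rw [not_le] at hlt
  have hhτ : h τ = 0 := by
    by_contra h0
    exact absurd (hh τ (Finsupp.mem_support_iff.mpr h0)) (not_le.mpr hlt)
  have hgτ : g τ = 0 := by
    by_contra h0
    have : τ ∈ B := Finset.mem_filter.mpr ⟨Finsupp.mem_support_iff.mpr h0, hlt⟩
    rw [hBempty] at this
    exact absurd this (Finset.notMem_empty τ)
  have hsum0 : (g.sum fun σ c => c * tlδ ord σ τ) = 0 := by
    apply Finset.sum_eq_zero
    intro σ hσ
    by_cases ht : tlδ ord σ τ = 0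
    · simp only [ht, mul_zero]
    · obtain ⟨hσB, _⟩ := hext hσ ht hlt
      rw [hBempty] at hσB
      exact absurd hσB (Finset.notMem_empty σ)
  have : f τ = 0 := by
    rw [decomp_apply p ord hfg τ, hhτ, hgτ, hsum0]; ring
  exact absurd this (Finsupp.mem_support_iff.mp hτ)


lemma sum_smul_urel_mem (g : UT ord →₀ ℤ) :
    (g.sum fun σ c => c • urel p ord σ) ∈ UR p ord := by
  apply AddSubgroup.sum_mem
  intro σ _
  exact AddSubgroup.zsmul_mem _ (urel_mem p ord σ) _

lemma exists_reduced_aux (hp : 0 < p) :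
    ∀ N : ℕ, ∀ f : UF ord, (∀ σ ∈ f.support, σ.1.length ≤ N) →
      ∃ f' : UF ord, (∀ σ, (f' σ).natAbs < p) ∧ (∀ σ ∈ f'.support, σ.1.length ≤ N) ∧
        f - f' ∈ UR p ord := by
  intro N
  induction N with
  | zero =>
    intro f hf
    have : f = 0 := by
      ext σ
      by_contra h0
      have h1 := hf σ (Finsupp.mem_support_iff.mpr (by simpa using h0))
      have h2 := one_le_length ord σ
      omega
    refine ⟨0, fun σ => by simpa using hp, fun σ hσ => by simp at hσ, ?_⟩
    rw [this]
    simpa using AddSubgroup.zero_mem (UR p ord)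
  | succ N ih =>
    classical
    intro f hf
    set ftop := f.filter (fun σ => σ.1.length = N+1) with hftop
    set flow := f.filter (fun σ => ¬ σ.1.length = N+1) with hflow
    have hsplit : ftop + flow = f := Finsupp.filter_pos_add_filter_neg f _
    have htopmem : ∀ σ ∈ ftop.support, σ.1.length = N + 1 := by
      intro σ hσ
      rw [hftop, Finsupp.support_filter] at hσ
      exact (Finset.mem_filter.mp hσ).2
    set r := ftop.mapRange (fun c => c % (p:ℤ)) (by simp) with hr
    set q := ftop.mapRange (fun c => c / (p:ℤ)) (by simp) with hq
    have htop : ftop = r + (p:ℤ) • q := by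
      ext τ
      rw [Finsupp.add_apply, Finsupp.smul_apply, hr, hq, Finsupp.mapRange_apply,
        Finsupp.mapRange_apply, _root_.smul_eq_mul]
      exact (Int.emod_add_mul_ediv (ftop τ) (p:ℤ)).symm
    set moved := q.sum fun σ c => c • tlδ ord σ with hmoved
    have hfeq : f = (flow + moved) + r + (q.sum fun σ c => c • urel p ord σ) := by
      rw [sum_smul_urel_eq, ← hsplit, htop, ← hmoved]
      abel
    have hmoved_supp : ∀ σ ∈ moved.support, σ.1.length ≤ N := by
      intro σ hσ
      rw [hmoved] at hσ
      have := Finsupp.support_sum hσ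
      obtain ⟨τ, hτq, hστ⟩ := Finset.mem_biUnion.mp this
      have hστ' : σ ∈ (tlδ ord τ).support := Finsupp.support_smul hστ
      have hτtop : τ ∈ ftop.support := Finsupp.support_mapRange hτq
      have hlenτ : τ.1.length = N + 1 := htopmem τ hτtop
      rw [tlδ] at hστ'
      cases hu : utl ord τ with
      | none => rw [hu] at hστ'; simp at hστ'
      | some τ' =>
        rw [hu] at hστ'
        simp only [Option.elim_some] at hστ'
        have : σ = τ' := by
          have := Finsupp.support_single_subset hστ'
          simpa using this
        subst this
        have := utl_length ord hu
        omega
    have hlow_supp : ∀ σ ∈ (flow + moved).support, σ.1.length ≤ N := by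
      intro σ hσ
      rcases Finset.mem_union.mp (Finsupp.support_add hσ) with h | h
      · rw [hflow, Finsupp.support_filter] at h
        obtain ⟨hmem, hne⟩ := Finset.mem_filter.mp h
        have := hf σ hmem
        omega
      · exact hmoved_supp σ h
    obtain ⟨f'', hred, hsupp'', hmem⟩ := ih (flow + moved) hlow_supp
    have hrtop : ∀ σ ∈ r.support, σ.1.length = N + 1 := by
      intro σ hσ
      exact htopmem σ (Finsupp.support_mapRange hσ)
    refine ⟨f'' + r, ?_, ?_, ?_⟩
    · intro σ
      by_cases hσ : σ.1.length = N + 1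
      · have h0 : f'' σ = 0 := by
          by_contra h0
          have := hsupp'' σ (Finsupp.mem_support_iff.mpr h0)
          omega
        rw [Finsupp.add_apply, h0, zero_add, hr, Finsupp.mapRange_apply]
        have hp' : (0:ℤ) < (p:ℤ) := by exact_mod_cast hp
        have h1 : 0 ≤ ftop σ % (p:ℤ) := Int.emod_nonneg _ (ne_of_gt hp')
        have h2 : ftop σ % (p:ℤ) < (p:ℤ) := Int.emod_lt_of_pos _ hp'
        omega
      · have h0 : r σ = 0 := by
          by_contra h0
          exact hσ (hrtop σ (Finsupp.mem_support_iff.mpr h0))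
        rw [Finsupp.add_apply, h0, add_zero]
        exact hred σ
    · intro σ hσ
      rcases Finset.mem_union.mp (Finsupp.support_add hσ) with h | h
      · have := hsupp'' σ h; omega
      · have := hrtop σ h; omega
    · have heq : f - (f'' + r) = ((flow + moved) - f'') + (q.sum fun σ c => c • urel p ord σ) := by
        rw [hfeq]; abel
      rw [heq]
      exact AddSubgroup.add_mem _ hmem (sum_smul_urel_mem p ord q)

lemma exists_reduced (hp : 0 < p) (f : UF ord) :
    ∃ f' : UF ord, (∀ σ, (f' σ).natAbs < p) ∧ umk p ord f' = umk p ord f := by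
  classical
  obtain ⟨N, hN⟩ : ∃ N : ℕ, ∀ σ ∈ f.support, σ.1.length ≤ N := by
    rcases Finset.eq_empty_or_nonempty f.support with he | hne
    · exact ⟨0, fun σ hσ => by rw [he] at hσ; simp at hσ⟩
    · obtain ⟨σ0, _, hmax⟩ := Finset.exists_max_image f.support (fun σ => σ.1.length) hne
      exact ⟨σ0.1.length, hmax⟩
  obtain ⟨f', hred, _, hmem⟩ := exists_reduced_aux p ord hp N f hN
  refine ⟨f', hred, ?_⟩
  rw [umk_eq_iff]
  simpa using AddSubgroup.neg_mem _ hmem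


lemma mem_US_reduced {γ : Ordinal.{0}} {f : UF ord}
    (hred : ∀ σ, (f σ).natAbs < p) (hx : umk p ord f ∈ US p ord γ) :
    ∀ σ ∈ f.support, γ ≤ uhd ord σ := by
  obtain ⟨h, hh, hhx⟩ := (mem_US_iff p ord).mp hx
  have : f - h ∈ UR p ord := by
    rw [← umk_eq_iff]
    exact hhx.symm
  obtain ⟨g, hg⟩ := (mem_UR_iff p ord).mp this
  have hfg : f = h + g.sum fun σ c => c • urel p ord σ := by
    rw [hg]; abel
  exact reduced_supp_of_decomp p ord (hp := by
    rcases Nat.eq_zero_or_pos p with h0 | h0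
    · exact absurd (hred ⟨[0], by simp, List.isChain_singleton 0⟩) (by omega)
    · exact h0) hred hh hfg

section Main

variable {α : Ordinal.{0}}
variable (hord : ∀ n, ord n < α) (hsurj : ∀ β < α, ∃ n, ord n = β)

lemma US_zero : US p ord 0 = ⊤ := by
  rw [eq_top_iff]
  intro x _
  obtain ⟨f, rfl⟩ := umk_surjective p ord x
  exact (mem_US_iff p ord).mpr ⟨f, fun σ _ => zero_le, rfl⟩

include hord hsurj in
lemma US_succ (β : Ordinal.{0}) :
    AddSubgroup.map (pHom p (UG p ord)) (US p ord β) = US p ord (β + 1) := by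
  classical
  apply le_antisymm
  · rintro x ⟨y, hy, rfl⟩
    obtain ⟨f, hf, rfl⟩ := (mem_US_iff p ord).mp hy
    rw [pHom_apply]
    have key : p • umk p ord f = umk p ord (f.sum fun σ c => c • tlδ ord σ) := by
      have h1 : (p:ℤ) • f = (f.sum fun σ c => c • urel p ord σ)
          + f.sum fun σ c => c • tlδ ord σ := by
        rw [sum_smul_urel_eq]; abel
      have h2 : p • umk p ord f = umk p ord ((p:ℤ) • f) := by
        rw [← natCast_zsmul, map_zsmul]
      rw [h2, h1, map_add, (umk_eq_zero_iff p ord).mpr (sum_smul_urel_mem p ord f), zero_add]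
    rw [key]
    apply (mem_US_iff p ord).mpr
    refine ⟨_, ?_, rfl⟩
    intro σ hσ
    obtain ⟨τ, hτ, hστ⟩ := Finset.mem_biUnion.mp (Finsupp.support_sum hσ)
    have hστ' : σ ∈ (tlδ ord τ).support := Finsupp.support_smul hστ
    rw [tlδ] at hστ'
    cases hu : utl ord τ with
    | none => rw [hu] at hστ'; simp at hστ'
    | some τ' =>
      rw [hu] at hστ'
      simp only [Option.elim_some] at hστ'
      have : σ = τ' := by simpa using Finsupp.support_single_subset hστ'
      subst this
      have h3 : uhd ord τ < uhd ord σ := utl_hd ord hu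
      rw [Order.add_one_le_iff]
      exact lt_of_le_of_lt (hf τ hτ) h3
  · rw [US]
    rw [AddSubgroup.closure_le]
    rintro x ⟨τ, hτ, rfl⟩
    simp only [Set.mem_setOf_eq] at hτ
    have hβτ : β < uhd ord τ := by
      rw [← Order.add_one_le_iff]; exact hτ
    have hβα : β < α := lt_trans hβτ (hord _)
    obtain ⟨n, hn⟩ := hsurj β hβα
    have hlt : ord n < uhd ord τ := by rw [hn]; exact hβτ
    set σ := ucons ord n τ hlt with hσ
    refine ⟨umk p ord (single σ 1), ?_, ?_⟩
    · apply (mem_US_iff p ord).mpr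
      refine ⟨single σ 1, ?_, rfl⟩
      intro σ' hσ'
      have : σ' = σ := by simpa using Finsupp.support_single_subset hσ'
      subst this
      rw [hσ, uhd_ucons, hn]
    · rw [pHom_apply, p_smul_umk_single, tlδ, utl_ucons]
      simp

include hord in
lemma US_ge (β : Ordinal.{0}) (hβ : α ≤ β) : US p ord β = ⊥ := by
  have : {σ : UT ord | β ≤ uhd ord σ} = ∅ := by
    ext σ
    simp only [Set.mem_setOf_eq, Set.mem_empty_iff_false, iff_false, not_le]
    exact lt_of_lt_of_le (hord _) hβ
  rw [US, this]
  simp [AddSubgroup.closure_empty]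

lemma US_limit (hp : 0 < p) (β : Ordinal.{0}) (hβ : Order.IsSuccLimit β) :
    (⨅ (γ : Ordinal.{0}) (_ : γ < β), US p ord γ) = US p ord β := by
  apply le_antisymm
  · intro x hx
    have hx' : ∀ γ < β, x ∈ US p ord γ := by
      intro γ hγ
      have := AddSubgroup.mem_iInf.mp hx γ
      exact AddSubgroup.mem_iInf.mp this hγ
    obtain ⟨f0, rfl⟩ := umk_surjective p ord x
    obtain ⟨f, hred, hf⟩ := exists_reduced p ord hp f0
    rw [← hf]
    apply (mem_US_iff p ord).mpr
    refine ⟨f, ?_, rfl⟩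
    intro σ hσ
    by_contra hcon
    rw [not_le] at hcon
    have h1 : uhd ord σ + 1 < β := by
      rw [Ordinal.add_one_eq_succ]
      exact hβ.succ_lt hcon
    have h2 := mem_US_reduced p ord hred (hf ▸ hx' _ h1) σ hσ
    have := lt_of_lt_of_le (Order.lt_add_one_iff.mpr le_rfl) h2
    exact lt_irrefl _ this
  · apply le_iInf
    intro γ
    apply le_iInf
    intro hγ
    exact US_antitone p ord (le_of_lt hγ)


lemma ulmSub_limit' (G : Type*) [AddCommGroup G] {o : Ordinal.{0}} (ho : Order.IsSuccLimit o) :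
    ulmSub p G o = ⨅ (γ : Ordinal.{0}) (_ : γ < o), ulmSub p G γ := by
  unfold ulmSub
  rw [Ordinal.limitRecOn_limit _ _ _ _ ho]

include hord hsurj in
lemma ulmSub_eq (hp : 0 < p) (β : Ordinal.{0}) :
    ulmSub p (UG p ord) β = US p ord β := by
  induction β using Ordinal.limitRecOn with
  | zero =>
    show ulmSub p (UG p ord) 0 = _
    unfold ulmSub
    rw [Ordinal.limitRecOn_zero]
    exact (US_zero p ord).symm
  | add_one β ih =>
    rw [ulmSub_succ, ih, US_succ p ord hord hsurj β]
  | limit β hβ ih =>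
    rw [ulmSub_limit' p _ hβ, ← US_limit p ord hp β hβ]
    exact iInf_congr fun γ => iInf_congr fun hγ => ih γ hγ

lemma pow_smul_single (k : ℕ) : ∀ σ : UT ord, σ.1.length ≤ k →
    p ^ k • umk p ord (single σ 1) = 0 := by
  induction k with
  | zero =>
    intro σ h
    have := one_le_length ord σ
    omega
  | succ k ih =>
    intro σ h
    rw [pow_succ, mul_smul, p_smul_umk_single]
    cases hu : utl ord σ with
    | none => rw [tlδ, hu]; simp
    | some τ =>
      rw [tlδ, hu]
      simp only [Option.elim_some]
      apply ih
      have := utl_length ord hu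
      omega

lemma isAbelianPGroup : IsAbelianPGroup p (UG p ord) := by
  intro x
  obtain ⟨f, rfl⟩ := umk_surjective p ord x
  induction f using Finsupp.induction_linear with
  | zero => exact ⟨0, by simp⟩
  | add f g hf hg =>
    obtain ⟨n, hn⟩ := hf
    obtain ⟨m, hm⟩ := hg
    refine ⟨n + m, ?_⟩
    rw [map_add, smul_add]
    have h1 : p ^ (n + m) • umk p ord f = 0 := by
      rw [pow_add, mul_comm, mul_smul, hn, smul_zero]
    have h2 : p ^ (n + m) • umk p ord g = 0 := by
      rw [pow_add, mul_smul, hm, smul_zero]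
    rw [h1, h2, add_zero]
  | single σ c =>
    refine ⟨σ.1.length, ?_⟩
    have h1 : (single σ c : UF ord) = c • single σ 1 := by
      rw [Finsupp.smul_single', mul_one]
    rw [h1, map_zsmul, smul_comm, pow_smul_single p ord σ.1.length σ le_rfl, smul_zero]

include hord hsurj in
lemma US_ne (hp2 : 2 ≤ p) (β : Ordinal.{0}) (hβ : β < α) : US p ord β ≠ US p ord (β + 1) := by
  classical
  obtain ⟨n, hn⟩ := hsurj β hβ
  set σ : UT ord := ⟨[n], by simp, List.isChain_singleton n⟩ with hσdef
  have huhd : uhd ord σ = β := hn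
  intro heq
  have hmem : umk p ord (single σ 1) ∈ US p ord β := by
    apply (mem_US_iff p ord).mpr
    refine ⟨single σ 1, ?_, rfl⟩
    intro σ' hσ'
    have : σ' = σ := by simpa using Finsupp.support_single_subset hσ'
    subst this
    rw [huhd]
  rw [heq] at hmem
  have hred : ∀ τ : UT ord, ((single σ (1:ℤ) : UF ord) τ).natAbs < p := by
    intro τ
    rw [Finsupp.single_apply]
    split <;> simp <;> omega
  have := mem_US_reduced p ord hred hmem σ (by
    rw [Finsupp.mem_support_iff, Finsupp.single_eq_same]; exact one_ne_zero)
  rw [huhd, Order.add_one_le_iff] at this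
  exact lt_irrefl _ this

include hord hsurj in
lemma ulmLength_eq (hp2 : 2 ≤ p) : ulmLength p (UG p ord) = α := by
  have hp : 0 < p := by omega
  have hα' : α ∈ {β : Ordinal.{0} | ulmSub p (UG p ord) β = ulmSub p (UG p ord) (β + 1)} := by
    simp only [Set.mem_setOf_eq]
    rw [ulmSub_eq p ord hord hsurj hp, ulmSub_eq p ord hord hsurj hp,
      US_ge p ord hord α le_rfl, US_ge p ord hord (α + 1) le_self_add]
  apply le_antisymm
  · exact csInf_le' hα'
  · apply le_csInf ⟨α, hα'⟩
    intro β hβ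
    by_contra hcon
    rw [not_le] at hcon
    simp only [Set.mem_setOf_eq] at hβ
    rw [ulmSub_eq p ord hord hsurj hp, ulmSub_eq p ord hord hsurj hp] at hβ
    exact US_ne p ord hord hsurj hp2 β hcon hβ

include hord hsurj in
lemma isReduced (hp2 : 2 ≤ p) : IsReducedPGroup p (UG p ord) := by
  rw [IsReducedPGroup, ulmLength_eq p ord hord hsurj hp2,
    ulmSub_eq p ord hord hsurj (by omega), US_ge p ord hord α le_rfl]


lemma utl_pair (a b : ℕ) (h : ([a,b] : List ℕ) ≠ [] ∧ ([a,b] : List ℕ).Chain' fun m n => ord m < ord n) :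
    utl ord ⟨[a,b], h⟩ = some ⟨[b], ⟨by simp, by rw [List.Chain']; exact List.isChain_singleton b⟩⟩ := by
  unfold utl
  rw [dif_neg (by simp : (([a,b] : List ℕ)).tail ≠ [])]
  rfl

include hord hsurj in
lemma ulmInvariant_eq (hp : p.Prime) (hα : Order.IsSuccLimit α) (β : Ordinal.{0}) (hβ : β < α) :
    ulmInvariant p (UG p ord) β = Cardinal.aleph0 := by
  classical
  haveI : Fact p.Prime := ⟨hp⟩
  haveI : NeZero p := ⟨hp.ne_zero⟩
  have hp2 : 2 ≤ p := hp.two_le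
  have hppos : 0 < p := hp.pos
  -- countability gives the upper bound
  haveI hcnt : Countable (ulmQuot p (UG p ord) β) :=
    inferInstanceAs (Countable (Quotient (QuotientAddGroup.leftRel
      ((ulmP p (UG p ord) (β + 1)).addSubgroupOf (ulmP p (UG p ord) β)))))
  rw [ulmInvariant]
  apply le_antisymm
  · exact le_trans (rank_le_card (ZMod p) (ulmQuot p (UG p ord) β)) (Cardinal.mk_le_aleph0)
  -- the family of independent elements
  have hnat : ∀ (δ : Ordinal.{0}), δ < α → ∀ k : ℕ, δ + (k : Ordinal.{0}) < α := by
    intro δ hδ k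
    induction k with
    | zero => simpa using hδ
    | succ k ih =>
      have : ((k + 1 : ℕ) : Ordinal.{0}) = (k : Ordinal.{0}) + 1 := by
        push_cast; rfl
      rw [this, ← add_assoc, Ordinal.add_one_eq_succ]
      exact hα.succ_lt ih
  set γ : ℕ → Ordinal.{0} := fun i => β + ((i + 2 : ℕ) : Ordinal.{0}) with hγ
  have hγα : ∀ i, γ i < α := fun i => hnat β hβ (i + 2)
  have hγinj : Function.Injective γ := by
    intro i j hij
    rw [hγ] at hij
    simp only at hij
    have h' := (add_right_inj β).mp hij
    have h'' : i + 2 = j + 2 := by exact_mod_cast h'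
    omega
  have hβγ : ∀ i, β < γ i := by
    intro i
    rw [hγ]
    have h0 : (0:Ordinal.{0}) < ((i + 2 : ℕ) : Ordinal.{0}) := by
      exact_mod_cast Nat.succ_pos (i + 1)
    calc β = β + 0 := (add_zero β).symm
    _ < β + ((i + 2 : ℕ) : Ordinal.{0}) := (add_lt_add_iff_left β).mpr h0
  have hβ1γ : ∀ i, β + 1 < γ i := by
    intro i
    rw [hγ]
    have h1 : (1 : Ordinal.{0}) < ((i + 2 : ℕ) : Ordinal.{0}) := by
      exact_mod_cast Nat.lt_of_lt_of_le Nat.one_lt_two (by omega)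
    exact (add_lt_add_iff_left β).mpr h1
  obtain ⟨n1, hn1⟩ := hsurj β hβ
  have hβ1α : β + 1 < α := by
    have := hnat β hβ 1
    simpa using this
  obtain ⟨n2, hn2⟩ := hsurj (β + 1) hβ1α
  choose m hm using fun i => hsurj (γ i) (hγα i)
  have hminj : Function.Injective m := by
    intro i j hij
    apply hγinj
    rw [← hm i, ← hm j, hij]
  have hn12 : n1 ≠ n2 := by
    intro h
    rw [h, hn2] at hn1
    exact absurd hn1 (by
      intro hh
      have : β < β + 1 := by
        rw [Ordinal.add_one_eq_succ]; exact Order.lt_succ β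
      rw [hh] at this
      exact lt_irrefl _ this)
  set σ : ℕ → UT ord := fun i => ⟨[n1, m i], ⟨by simp, by
    rw [List.Chain', List.isChain_pair, hn1, hm i]; exact hβγ i⟩⟩ with hσ
  set τ : ℕ → UT ord := fun i => ⟨[n2, m i], ⟨by simp, by
    rw [List.Chain', List.isChain_pair, hn2, hm i]; exact hβ1γ i⟩⟩ with hτ
  have hσinj : Function.Injective σ := by
    intro i j hij
    have h' := congrArg (fun x : UT ord => x.1) hij
    simp only [hσ, List.cons.injEq, and_true] at h'
    exact hminj h'.2
  have hτinj : Function.Injective τ := by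
    intro i j hij
    have h' := congrArg (fun x : UT ord => x.1) hij
    simp only [hτ, List.cons.injEq, and_true] at h'
    exact hminj h'.2
  have hστ : ∀ i j, σ i ≠ τ j := by
    intro i j h
    have h' := congrArg (fun x : UT ord => x.1) h
    simp only [hσ, hτ, List.cons.injEq] at h'
    exact hn12 h'.1
  have huσ : ∀ i, uhd ord (σ i) = β := fun i => hn1
  have huτ : ∀ i, uhd ord (τ i) = β + 1 := fun i => hn2
  -- the elements
  set X : ℕ → UF ord := fun i => single (σ i) 1 - single (τ i) 1 with hX
  set d : ℕ → UG p ord := fun i => umk p ord (X i) with hd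
  have hdker : ∀ i, p • d i = 0 := by
    intro i
    rw [hd, hX]
    simp only
    rw [map_sub, smul_sub, p_smul_umk_single, p_smul_umk_single, hσ, hτ]
    simp only
    unfold tlδ
    rw [utl_pair, utl_pair]
    exact _root_.sub_self _
  have hdmem : ∀ i, d i ∈ ulmP p (UG p ord) β := by
    intro i
    rw [ulmP]
    apply AddSubgroup.mem_inf.mpr
    constructor
    · rw [AddMonoidHom.mem_ker, pHom_apply]
      exact hdker i
    · rw [ulmSub_eq p ord hord hsurj hppos]
      apply (mem_US_iff p ord).mpr
      refine ⟨X i, ?_, rfl⟩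
      intro ρ hρ
      rw [hX] at hρ
      simp only at hρ
      have := Finsupp.support_sub hρ
      rcases Finset.mem_union.mp this with h | h
      · have : ρ = σ i := by simpa using Finsupp.support_single_subset h
        rw [this, huσ]
      · have : ρ = τ i := by simpa using Finsupp.support_single_subset h
        rw [this, huτ]
        exact le_self_add
  set v : ℕ → ulmQuot p (UG p ord) β := fun i =>
    QuotientAddGroup.mk' ((ulmP p (UG p ord) (β + 1)).addSubgroupOf (ulmP p (UG p ord) β))
      ⟨d i, hdmem i⟩ with hv
  have hlin : LinearIndependent (ZMod p) v := by
    rw [linearIndependent_iff']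
    intro s g hsum i hi
    set c : ℕ → ℤ := fun j => ((g j).val : ℤ) with hc
    -- rewrite the sum as an nsmul sum
    have h1 : ∀ j, g j • v j = (g j).val • v j := by
      intro j
      conv_lhs => rw [← ZMod.natCast_rightInverse (g j)]
      rw [Nat.cast_smul_eq_nsmul]
    rw [Finset.sum_congr rfl fun j _ => h1 j] at hsum
    set w : ulmP p (UG p ord) β := ∑ j ∈ s, (g j).val • (⟨d j, hdmem j⟩ : ulmP p (UG p ord) β)
      with hw
    have h2 : w ∈
        (ulmP p (UG p ord) (β + 1)).addSubgroupOf (ulmP p (UG p ord) β) := by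
      rw [hw]
      rw [← QuotientAddGroup.eq_zero_iff]
      have hmk : (QuotientAddGroup.mk'
            ((ulmP p (UG p ord) (β + 1)).addSubgroupOf (ulmP p (UG p ord) β)))
            (∑ j ∈ s, (g j).val • (⟨d j, hdmem j⟩ : ulmP p (UG p ord) β))
          = ∑ j ∈ s, (g j).val • v j := by
        rw [map_sum]
        apply Finset.sum_congr rfl
        intro j _
        rw [map_nsmul, hv]
        rfl
      rw [QuotientAddGroup.mk'_apply] at hmk
      rw [hmk, hsum]
      rfl
    rw [AddSubgroup.mem_addSubgroupOf] at h2
    have h3 : (w : UG p ord) = ∑ j ∈ s, (g j).val • d j :=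
      calc (w : UG p ord) = (ulmP p (UG p ord) β).subtype w := rfl
      _ = ∑ j ∈ s, (ulmP p (UG p ord) β).subtype
            ((g j).val • (⟨d j, hdmem j⟩ : ulmP p (UG p ord) β)) := by rw [hw, map_sum]
      _ = ∑ j ∈ s, (g j).val • d j := Finset.sum_congr rfl fun j _ => by
            rw [map_nsmul]; rfl
    rw [h3] at h2
    -- express as umk of an explicit Finsupp
    set F : UF ord := (∑ j ∈ s, single (σ j) (c j)) - ∑ j ∈ s, single (τ j) (c j) with hF
    have h4 : (∑ j ∈ s, (g j).val • d j) = umk p ord F := by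
      rw [hF, map_sub, map_sum, map_sum, ← Finset.sum_sub_distrib]
      apply Finset.sum_congr rfl
      intro j _
      rw [hd, hX]
      simp only
      have : (g j).val • umk p ord (single (σ j) 1 - single (τ j) 1)
          = umk p ord ((c j) • (single (σ j) 1 - single (τ j) 1)) := by
        rw [map_zsmul, hc]
        simp only
        rw [natCast_zsmul]
      rw [this, smul_sub]
      simp [Finsupp.smul_single']
    rw [h4] at h2
    have h2' : umk p ord F ∈ US p ord (β + 1) := by
      have := (AddSubgroup.mem_inf.mp h2).2
      rwa [ulmSub_eq p ord hord hsurj hppos] at this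
    -- evaluation lemmas
    have keyB : ∀ (w : ℕ → UT ord), Function.Injective w → ∀ j ∈ s,
        (∑ k ∈ s, single (w k) (c k) : UF ord) (w j) = c j := by
      intro w hw j hj
      rw [Finsupp.finset_sum_apply]
      have hside : ∀ k ∈ s, k ≠ j → (single (w k) (c k) : UF ord) (w j) = 0 := by
        intro k _ hkj
        rw [Finsupp.single_apply, if_neg (fun hh => hkj (hw hh))]
      rw [Finset.sum_eq_single_of_mem j hj hside, Finsupp.single_apply, if_pos rfl]
    have keyA : ∀ (w : ℕ → UT ord) (ρ : UT ord), (∀ j ∈ s, w j ≠ ρ) →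
        (∑ k ∈ s, single (w k) (c k) : UF ord) ρ = 0 := by
      intro w ρ hwρ
      rw [Finsupp.finset_sum_apply]
      apply Finset.sum_eq_zero
      intro k hk
      rw [Finsupp.single_apply, if_neg (hwρ k hk)]
    have hcp : ∀ j, (c j).natAbs < p := by
      intro j
      rw [hc]
      simp only [Int.natAbs_natCast]
      exact ZMod.val_lt (g j)
    have hFred : ∀ ρ : UT ord, (F ρ).natAbs < p := by
      intro ρ
      rw [hF, Finsupp.sub_apply]
      by_cases h5 : ∃ j ∈ s, σ j = ρ
      · obtain ⟨j, hj, hjρ⟩ := h5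
        rw [← hjρ]
        rw [keyB σ hσinj j hj]
        rw [keyA τ (σ j) (fun k _ hk => hστ j k hk.symm)]
        simpa using hcp j
      · push_neg at h5
        rw [keyA σ ρ h5]
        by_cases h6 : ∃ j ∈ s, τ j = ρ
        · obtain ⟨j, hj, hjρ⟩ := h6
          rw [← hjρ, keyB τ hτinj j hj]
          simpa using hcp j
        · push_neg at h6
          rw [keyA τ ρ h6]
          simpa using hppos
    -- conclude
    have h7 := mem_US_reduced p ord hFred h2'
    have h8 : F (σ i) = c i := by
      rw [hF, Finsupp.sub_apply, keyB σ hσinj i hi,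
        keyA τ (σ i) (fun k _ hk => hστ i k hk.symm)]
      simp
    have h9 : F (σ i) = 0 := by
      by_contra h9
      have := h7 (σ i) (Finsupp.mem_support_iff.mpr h9)
      rw [huσ] at this
      rw [Order.add_one_le_iff] at this
      exact lt_irrefl _ this
    rw [h8, hc] at h9
    simp only [Nat.cast_eq_zero] at h9
    have := ZMod.val_eq_zero (g i)
    rw [← this]
    exact_mod_cast h9
  rw [← Cardinal.mk_nat]
  exact hlin.cardinal_le_rank

end Main

end UlmConstr


open Classical in
/-- The height of `x`: the unique ordinal `β` with `x ∈ G_β \ G_{β+1}` if it exists, and `∞`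
(= `⊤`) otherwise. -/
noncomputable def height (p : ℕ) {G : Type*} [AddCommGroup G] (x : G) : WithTop Ordinal.{0} :=
  if ∃ β : Ordinal.{0}, x ∈ ulmSub p G β ∧ x ∉ ulmSub p G (β + 1) then
    ((sInf {β : Ordinal.{0} | x ∈ ulmSub p G β ∧ x ∉ ulmSub p G (β + 1)} : Ordinal.{0}) :
      WithTop Ordinal.{0})
  else ⊤

/-- `d` is proper with respect to `S` if `h(d) ≥ h(d+s)` for every `s ∈ S`. -/
def ProperWRT (p : ℕ) {G : Type*} [AddCommGroup G] (S : AddSubgroup G) (d : G) : Prop :=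
  ∀ s ∈ S, height p (d + s) ≤ height p d

/-- For every countable limit ordinal `α` there is a countable reduced abelian `p`-group of
length exactly `α` with all Ulm invariants below `α` equal to `ℵ₀`. -/
theorem exists_group_of_length (p : ℕ) (hp : p.Prime) (α : Ordinal.{0}) (hα : Order.IsSuccLimit α)
    (hαc : α.card ≤ Cardinal.aleph0) :
    ∃ (G : Type) (_ : AddCommGroup G), Countable G ∧ IsAbelianPGroup p G ∧
      IsReducedPGroup p G ∧ ulmLength p G = α ∧
      ∀ β : Ordinal.{0}, β < α → ulmInvariant p G β = Cardinal.aleph0 := by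
  classical
  haveI hne : Nonempty (Set.Iio α) := ⟨⟨0, hα.pos⟩⟩
  haveI hcnt : Countable (Set.Iio α) := by
    rw [← Cardinal.mk_le_aleph0_iff, Ordinal.mk_Iio_ordinal]
    calc Cardinal.lift.{1} α.card ≤ Cardinal.lift.{1} Cardinal.aleph0 :=
          Cardinal.lift_le.mpr hαc
    _ = Cardinal.aleph0 := by simp
  obtain ⟨f, hf⟩ := (countable_iff_exists_surjective (α := Set.Iio α)).mp hcnt
  set ord : ℕ → Ordinal.{0} := fun n => (f n).1 with hordd
  have hord : ∀ n, ord n < α := fun n => (f n).2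
  have hsurj : ∀ β < α, ∃ n, ord n = β := by
    intro β hβ
    obtain ⟨n, hn⟩ := hf ⟨β, hβ⟩
    exact ⟨n, by rw [hordd]; simp only; rw [hn]⟩
  refine ⟨UlmConstr.UG p ord, inferInstance, inferInstance,
    UlmConstr.isAbelianPGroup p ord,
    UlmConstr.isReduced p ord hord hsurj hp.two_le,
    UlmConstr.ulmLength_eq p ord hord hsurj hp.two_le,
    fun β hβ => UlmConstr.ulmInvariant_eq p ord hord hsurj hp hα β hβ⟩
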